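/- For every p > 0, S_p(1/5) = 2 \cdot 4^p/(20^p - 5^p) and S_p(2/5) = (8^p + 2^p)/(20^p - 5^p). -/

import Mathlib

open Real

noncomputable def T0 (x : ℝ) : ℝ := |x - round x|

noncomputable def S (p x : ℝ) : ℝ := ∑' n : ℕ, (T0 (2 ^ n * x) / 2 ^ n) ^ p

lemma T0_add_int (x : ℝ) (n : ℤ) : T0 (x + n) = T0 x := by
  unfold T0
  rw [round_add_intCast]
  push_cast
  ring_nf

lemma key1 : ∀ n : ℕ, T0 (2 ^ n * (1/5)) = if Even n then (1/5 : ℝ) else 2/5 := by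
  intro n
  induction n using Nat.strong_induction_on with
  | _ n ih =>
    match n with
    | 0 => norm_num [T0, round_eq]
    | 1 => norm_num [T0, round_eq, Nat.even_iff]
    | 2 =>
      have h : (2:ℝ) ^ 2 * (1/5) = 4/5 := by norm_num
      rw [h]; norm_num [T0, round_eq, Nat.even_iff]
    | 3 =>
      have h : (2:ℝ) ^ 3 * (1/5) = 8/5 := by norm_num
      rw [h]; norm_num [T0, round_eq, Nat.even_iff]
    | (m+4) =>
      have h : (2:ℝ) ^ (m+4) * (1/5) = 2 ^ m * (1/5) + ((3 * 2 ^ m : ℤ) : ℝ) := by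
        push_cast; ring
      rw [h, T0_add_int, ih m (by omega)]
      have h2 : Even (m + 4) ↔ Even m := by simp [Nat.even_iff]; omega
      simp [h2]

lemma key2 : ∀ n : ℕ, T0 (2 ^ n * (2/5)) = if Even n then (2/5 : ℝ) else 1/5 := by
  intro n
  induction n using Nat.strong_induction_on with
  | _ n ih =>
    match n with
    | 0 => norm_num [T0, round_eq]
    | 1 =>
      have h : (2:ℝ) ^ 1 * (2/5) = 4/5 := by norm_num
      rw [h]; norm_num [T0, round_eq, Nat.even_iff]
    | 2 =>
      have h : (2:ℝ) ^ 2 * (2/5) = 8/5 := by norm_num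
      rw [h]; norm_num [T0, round_eq, Nat.even_iff]
    | 3 =>
      have h : (2:ℝ) ^ 3 * (2/5) = 16/5 := by norm_num
      rw [h]; norm_num [T0, round_eq, Nat.even_iff]
    | (m+4) =>
      have h : (2:ℝ) ^ (m+4) * (2/5) = 2 ^ m * (2/5) + ((6 * 2 ^ m : ℤ) : ℝ) := by
        push_cast; ring
      rw [h, T0_add_int, ih m (by omega)]
      have h2 : Even (m + 4) ↔ Even m := by simp [Nat.even_iff]; omega
      simp [h2]

lemma term_eq (p c : ℝ) (hc : 0 ≤ c) (k : ℕ) :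
    (c / 4 ^ k) ^ p = c ^ p * (((1:ℝ)/4) ^ p) ^ k := by
  rw [div_rpow hc (by positivity), one_div, inv_rpow (by norm_num : (0:ℝ) ≤ 4), inv_pow,
    div_eq_mul_inv, ← rpow_natCast (4:ℝ) k, ← rpow_mul (by norm_num),
    mul_comm (k:ℝ) p, rpow_mul (by norm_num), rpow_natCast]

lemma geom_summable (p c : ℝ) (hp : 0 < p) (hc : 0 ≤ c) :
    Summable (fun k : ℕ => (c / 4 ^ k) ^ p) := by
  have h0 : (0:ℝ) ≤ ((1:ℝ)/4) ^ p := by positivity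
  have h1 : ((1:ℝ)/4) ^ p < 1 := rpow_lt_one (by norm_num) (by norm_num) hp
  exact ((summable_geometric_of_lt_one h0 h1).mul_left (c ^ p)).congr
    fun k => (term_eq p c hc k).symm

lemma geom_sum (p c : ℝ) (hp : 0 < p) (hc : 0 ≤ c) :
    ∑' k : ℕ, (c / 4 ^ k) ^ p = c ^ p * (1 - ((1:ℝ)/4) ^ p)⁻¹ := by
  have h0 : (0:ℝ) ≤ ((1:ℝ)/4) ^ p := by positivity
  have h1 : ((1:ℝ)/4) ^ p < 1 := rpow_lt_one (by norm_num) (by norm_num) hp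
  calc ∑' k : ℕ, (c / 4 ^ k) ^ p = ∑' k : ℕ, c ^ p * (((1:ℝ)/4) ^ p) ^ k :=
        tsum_congr (term_eq p c hc)
    _ = c ^ p * ∑' k : ℕ, (((1:ℝ)/4) ^ p) ^ k := tsum_mul_left
    _ = c ^ p * (1 - ((1:ℝ)/4) ^ p)⁻¹ := by rw [tsum_geometric_of_lt_one h0 h1]

theorem stmt_16 (p : ℝ) (hp : 0 < p) :
    S p (1 / 5) = 2 * 4 ^ p / (20 ^ p - 5 ^ p) ∧
    S p (2 / 5) = (8 ^ p + 2 ^ p) / (20 ^ p - 5 ^ p) := by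
  have h0 : (0:ℝ) ≤ ((1:ℝ)/4) ^ p := by positivity
  have h1 : ((1:ℝ)/4) ^ p < 1 := rpow_lt_one (by norm_num) (by norm_num) hp
  have hden : (1:ℝ) - ((1:ℝ)/4) ^ p ≠ 0 := by linarith
  have hden2 : (20:ℝ) ^ p - 5 ^ p ≠ 0 := by
    have : (5:ℝ) ^ p < 20 ^ p := rpow_lt_rpow (by norm_num) (by norm_num) hp
    linarith
  have ha : (0:ℝ) < 2 ^ p := rpow_pos_of_pos (by norm_num) p
  have hb : (0:ℝ) < 5 ^ p := rpow_pos_of_pos (by norm_num) p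
  have h4 : (4:ℝ) ^ p = 2 ^ p * 2 ^ p := by
    rw [← mul_rpow (by norm_num) (by norm_num)]; norm_num
  have h8 : (8:ℝ) ^ p = 2 ^ p * (2 ^ p * 2 ^ p) := by
    rw [← mul_rpow (by norm_num) (by norm_num), ← mul_rpow (by norm_num) (by norm_num)]
    norm_num
  have h20 : (20:ℝ) ^ p = 2 ^ p * 2 ^ p * 5 ^ p := by
    rw [← mul_rpow (by norm_num) (by norm_num), ← mul_rpow (by norm_num) (by norm_num)]
    norm_num
  have h14 : ((1:ℝ)/4) ^ p = (2 ^ p * 2 ^ p)⁻¹ := by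
    rw [← h4, one_div, inv_rpow (by norm_num)]
  have h15 : ((1:ℝ)/5) ^ p = (5 ^ p)⁻¹ := by
    rw [one_div, inv_rpow (by norm_num)]
  have h25 : ((2:ℝ)/5) ^ p = 2 ^ p / 5 ^ p := by rw [div_rpow] <;> norm_num
  have h110 : ((1:ℝ)/10) ^ p = (2 ^ p * 5 ^ p)⁻¹ := by
    rw [one_div, inv_rpow (by norm_num), ← mul_rpow (by norm_num) (by norm_num)]
    norm_num
  have hpow2 : ∀ k : ℕ, (2:ℝ) ^ (2 * k) = 4 ^ k := by
    intro k; rw [pow_mul]; norm_num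
  have hpow2' : ∀ k : ℕ, (2:ℝ) ^ (2 * k + 1) = 2 * 4 ^ k := by
    intro k; rw [pow_succ, hpow2]; ring
  have hodd : ∀ k : ℕ, ¬ Even (2 * k + 1) := by
    intro k; simp [Nat.even_iff, Nat.add_mod]
  constructor
  · set f : ℕ → ℝ := fun n => (T0 (2 ^ n * (1/5)) / 2 ^ n) ^ p with hf
    have he : ∀ k : ℕ, f (2 * k) = ((1/5 : ℝ) / 4 ^ k) ^ p := by
      intro k
      simp only [hf]
      rw [key1, if_pos (even_two_mul k), hpow2]
    have ho : ∀ k : ℕ, f (2 * k + 1) = ((1/5 : ℝ) / 4 ^ k) ^ p := by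
      intro k
      simp only [hf]
      rw [key1, if_neg (hodd k), hpow2']
      congr 1
      ring
    have hse : Summable fun k : ℕ => f (2 * k) :=
      (geom_summable p (1/5) hp (by norm_num)).congr fun k => (he k).symm
    have hso : Summable fun k : ℕ => f (2 * k + 1) :=
      (geom_summable p (1/5) hp (by norm_num)).congr fun k => (ho k).symm
    have hS : S p (1/5) = ∑' n, f n := rfl
    rw [hS, ← tsum_even_add_odd hse hso, tsum_congr he, tsum_congr ho,
      geom_sum p (1/5) hp (by norm_num), h15, h14]
    rw [h4, h20]
    rw [h14] at hden
    field_simp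
    ring
  · set f : ℕ → ℝ := fun n => (T0 (2 ^ n * (2/5)) / 2 ^ n) ^ p with hf
    have he : ∀ k : ℕ, f (2 * k) = ((2/5 : ℝ) / 4 ^ k) ^ p := by
      intro k
      simp only [hf]
      rw [key2, if_pos (even_two_mul k), hpow2]
    have ho : ∀ k : ℕ, f (2 * k + 1) = ((1/10 : ℝ) / 4 ^ k) ^ p := by
      intro k
      simp only [hf]
      rw [key2, if_neg (hodd k), hpow2']
      congr 1
      ring
    have hse : Summable fun k : ℕ => f (2 * k) :=
      (geom_summable p (2/5) hp (by norm_num)).congr fun k => (he k).symm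
    have hso : Summable fun k : ℕ => f (2 * k + 1) :=
      (geom_summable p (1/10) hp (by norm_num)).congr fun k => (ho k).symm
    have hS : S p (2/5) = ∑' n, f n := rfl
    rw [hS, ← tsum_even_add_odd hse hso, tsum_congr he, tsum_congr ho,
      geom_sum p (2/5) hp (by norm_num), geom_sum p (1/10) hp (by norm_num),
      h25, h110, h14]
    rw [h8, h20]
    rw [h20] at hden2
    have h2gt : (1:ℝ) < 2 ^ p :=
      (one_lt_rpow_iff_of_pos (by norm_num)).mpr (Or.inl ⟨by norm_num, hp⟩)
    have haa : (2:ℝ) ^ p * 2 ^ p - 1 ≠ 0 := by nlinarith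
    have hsplit : (1:ℝ) - (2 ^ p * 2 ^ p)⁻¹ = (2 ^ p * 2 ^ p - 1) / (2 ^ p * 2 ^ p) := by
      field_simp
    rw [hsplit, inv_div]
    field_simp
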